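/- Let P be a real polynomial of degree n ≥ 1 with only simple real negative zeros, positive leading coefficient, and let s > 0, α > 0 with s - α - n < 0. Define P̂(x) = x(1-x)P'(x) + (x(s-α)+α)P(x). Then P̂ has degree n+1, exactly n of its zeros are real and negative, and exactly one zero is real and greater than 1. -/

import Mathlib

open Polynomial

set_option maxHeartbeats 1600000 in
theorem stmt_6 (n : ℕ) (hn : 1 ≤ n) (c : ℝ) (hc : 0 < c) (x : Fin n → ℝ)
    (hxneg : ∀ i, x i < 0) (hxmono : ∀ i j : Fin n, i < j → x j < x i)
    (s α : ℝ) (hs : 0 < s) (hα : 0 < α) (hsan : s - α - n < 0)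
    (P Q : Polynomial ℝ) (hP : P = C c * ∏ i, (X - C (x i)))
    (hQ : Q = X * (1 - X) * P.derivative + (C (s - α) * X + C α) * P) :
    Q.natDegree = n + 1 ∧
    ∃ z : Fin (n + 1) → ℝ,
      Q = C Q.leadingCoeff * ∏ i, (X - C (z i)) ∧
      ∃ j : Fin (n + 1), 1 < z j ∧ ∀ i, i ≠ j → z i < 0 := by
  obtain ⟨m, rfl⟩ : ∃ m, n = m + 1 := ⟨n - 1, (Nat.succ_pred_eq_of_pos hn).symm⟩
  -- ### degree computation
  have hmon : (∏ i, (X - C (x i)) : ℝ[X]).Monic :=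
    monic_prod_of_monic _ _ fun i _ => monic_X_sub_C _
  have hdegp : (∏ i, (X - C (x i)) : ℝ[X]).natDegree = m + 1 := by
    rw [natDegree_prod _ _ fun i _ => X_sub_C_ne_zero _]
    simp
  have hPd : P.natDegree = m + 1 := by
    rw [hP, natDegree_C_mul hc.ne', hdegp]
  have hPlc : P.coeff (m + 1) = c := by
    have : P.leadingCoeff = c := by
      rw [hP, leadingCoeff_mul, leadingCoeff_C, hmon.leadingCoeff, mul_one]
    rwa [leadingCoeff, hPd] at this
  have hQ' : Q = X * P.derivative - X ^ 2 * P.derivative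
      + (C (s - α) * (X * P) + C α * P) := by rw [hQ]; ring
  have h1 : P.derivative.coeff (m + 1) = 0 := by
    rw [coeff_derivative]
    rw [coeff_eq_zero_of_natDegree_lt (by omega), zero_mul]
  have h2 : P.derivative.coeff m = c * (m + 1) := by
    rw [coeff_derivative, hPlc]
  have hQc : Q.coeff (m + 2) = c * (s - α - (m + 1)) := by
    have e1 : (X ^ 2 * P.derivative).coeff (m + 2) = P.derivative.coeff m :=
      coeff_X_pow_mul _ _ _
    have e2 : (X * P.derivative).coeff (m + 2) = P.derivative.coeff (m + 1) :=
      coeff_X_mul _ _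
    have e3 : (X * P).coeff (m + 2) = P.coeff (m + 1) := coeff_X_mul _ _
    have e4 : P.coeff (m + 2) = 0 := coeff_eq_zero_of_natDegree_lt (by omega)
    rw [hQ', coeff_add, coeff_sub, e1, e2, coeff_add, coeff_C_mul, coeff_C_mul, e3, e4,
      hPlc, h1, h2]
    ring
  have hsan' : s - α - ((m : ℝ) + 1) < 0 := by push_cast at hsan; linarith
  have hQne : Q.coeff (m + 2) ≠ 0 := by
    rw [hQc]; nlinarith
  have hdQ : Q.natDegree ≤ m + 2 := by
    have hd' : P.derivative.natDegree ≤ m := by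
      have := natDegree_derivative_le P
      omega
    rw [hQ']
    refine le_trans (natDegree_add_le _ _) (max_le (le_trans (natDegree_sub_le _ _)
      (max_le ?_ ?_)) (le_trans (natDegree_add_le _ _) (max_le ?_ ?_)))
    · exact le_trans (natDegree_mul_le) (by simp; omega)
    · exact le_trans (natDegree_mul_le) (by simp [natDegree_X_pow]; omega)
    · exact le_trans (natDegree_mul_le) (le_trans (add_le_add (natDegree_C _).le
        (natDegree_mul_le)) (by simp; omega))
    · exact le_trans (natDegree_mul_le) (by simp [natDegree_C]; omega)
  have hQdeg : Q.natDegree = m + 2 := le_antisymm hdQ (le_natDegree_of_ne_zero hQne)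
  have hQlc : Q.leadingCoeff = c * (s - α - (m + 1)) := by
    rw [leadingCoeff, hQdeg, hQc]
  have hQ0 : Q ≠ 0 := fun h => by simp [h] at hQdeg
  -- ### evaluations
  have hPe : ∀ t : ℝ, P.eval t = c * ∏ i, (t - x i) := by
    intro t; simp [hP, eval_prod]
  have hQe : ∀ t : ℝ, Q.eval t
      = t * (1 - t) * P.derivative.eval t + ((s - α) * t + α) * P.eval t := by
    intro t; simp [hQ]
  have hPx0 : ∀ k : Fin (m+1), P.eval (x k) = 0 := by
    intro k
    rw [hPe]
    rw [Finset.prod_eq_zero (Finset.mem_univ k) (by ring), mul_zero]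
  -- ### sign of P' at the roots
  have hP'sign : ∀ k : Fin (m+1), 0 < (-1:ℝ)^(k:ℕ) * P.derivative.eval (x k) := by
    have hP'e : ∀ k : Fin (m+1), P.derivative.eval (x k)
        = c * ∏ j ∈ Finset.univ.erase k, (x k - x j) := by
      intro k
      have hPk : P = (X - C (x k)) * (C c * ∏ j ∈ Finset.univ.erase k, (X - C (x j))) := by
        rw [hP, ← Finset.mul_prod_erase _ _ (Finset.mem_univ k)]; ring
      rw [hPk, derivative_mul]
      simp [eval_prod]
    intro k
    rw [hP'e]
    have hsplit : Finset.univ.erase k = Finset.Iio k ∪ Finset.Ioi k := by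
      ext j
      simp only [Finset.mem_erase, Finset.mem_union, Finset.mem_Iio, Finset.mem_Ioi,
        Finset.mem_univ, and_true]
      exact ⟨fun h => Ne.lt_or_gt h, fun h => h.elim ne_of_lt ne_of_gt⟩
    have hdisj : Disjoint (Finset.Iio k) (Finset.Ioi k) := by
      rw [Finset.disjoint_left]
      intro j h1 h2
      exact absurd (Finset.mem_Iio.1 h1) (not_lt.2 (Finset.mem_Ioi.1 h2).le)
    rw [hsplit, Finset.prod_union hdisj]
    have hIio : ∏ j ∈ Finset.Iio k, (x k - x j)
        = (-1:ℝ)^(k:ℕ) * ∏ j ∈ Finset.Iio k, (x j - x k) := by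
      rw [← Fin.card_Iio k, ← Finset.prod_const (-1:ℝ), ← Finset.prod_mul_distrib]
      exact Finset.prod_congr rfl fun j _ => by ring
    rw [hIio]
    have hpos1 : 0 < ∏ j ∈ Finset.Iio k, (x j - x k) :=
      Finset.prod_pos fun j hj => by
        have := hxmono j k (Finset.mem_Iio.1 hj); linarith
    have hpos2 : 0 < ∏ j ∈ Finset.Ioi k, (x k - x j) :=
      Finset.prod_pos fun j hj => by
        have := hxmono k j (Finset.mem_Ioi.1 hj); linarith
    have hsq : ((-1:ℝ)^(k:ℕ)) * ((-1:ℝ)^(k:ℕ)) = 1 := by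
      rw [← pow_add]; exact Even.neg_one_pow ⟨(k:ℕ), rfl⟩
    set A := ∏ j ∈ Finset.Iio k, (x j - x k)
    set B := ∏ j ∈ Finset.Ioi k, (x k - x j)
    set e := (-1:ℝ)^(k:ℕ)
    have : e * (c * (e * A * B)) = (e * e) * (c * (A * B)) := by ring
    rw [this, hsq, one_mul]
    positivity
  -- ### sign of Q at the roots of P
  have hQx : ∀ k : Fin (m+1), (-1:ℝ)^(k:ℕ) * Q.eval (x k) < 0 := by
    intro k
    have h := hP'sign k
    have hxk := hxneg k
    have : Q.eval (x k) = x k * (1 - x k) * P.derivative.eval (x k) := by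
      rw [hQe, hPx0, mul_zero, add_zero]
    rw [this]
    have hneg : x k * (1 - x k) < 0 := mul_neg_of_neg_of_pos hxk (by linarith)
    nlinarith
  -- ### the upper endpoints of the intervals
  have hQ0pos : 0 < Q.eval 0 := by
    have : P.eval 0 = c * ∏ i, (0 - x i) := hPe 0
    have hp : 0 < P.eval 0 := by
      rw [this]
      exact mul_pos hc (Finset.prod_pos fun i _ => by have := hxneg i; linarith)
    rw [hQe]
    simp only [zero_mul, mul_zero, zero_add, mul_zero, zero_sub]
    nlinarith
  set u : Fin (m+1) → ℝ := fun k =>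
    if hk : (k:ℕ) = 0 then 0 else x ⟨(k:ℕ) - 1, by omega⟩ with hu
  have hu_gt : ∀ k, x k < u k := by
    intro k
    by_cases hk : (k:ℕ) = 0
    · simp only [hu, hk, dif_pos]
      simpa [hk] using hxneg k
    · simp only [hu, dif_neg hk]
      exact hxmono ⟨(k:ℕ) - 1, by omega⟩ k (by rw [Fin.lt_def]; show (k:ℕ) - 1 < k; omega)
  have hu_le : ∀ k, u k ≤ 0 := by
    intro k
    by_cases hk : (k:ℕ) = 0
    · simp only [hu, dif_pos hk, le_refl]
    · simp only [hu, dif_neg hk]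
      exact (hxneg _).le
  have hQu : ∀ k : Fin (m+1), 0 < (-1:ℝ)^(k:ℕ) * Q.eval (u k) := by
    intro k
    by_cases hk : (k:ℕ) = 0
    · simp only [hu, hk, dif_pos, pow_zero, one_mul]
      simpa [hk] using hQ0pos
    · simp only [hu, dif_neg hk]
      have h := hQx ⟨(k:ℕ) - 1, by omega⟩
      have he : (-1:ℝ)^(k:ℕ) = -(-1:ℝ)^((k:ℕ) - 1) := by
        obtain ⟨j, hj⟩ : ∃ j, (k:ℕ) = j + 1 := ⟨(k:ℕ) - 1, by omega⟩
        rw [hj]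
        simp [pow_succ]
      rw [he]
      simpa using h
  -- ### roots via IVT
  have hr : ∀ k : Fin (m+1), ∃ r, r ∈ Set.Ioo (x k) (u k) ∧ Q.eval r = 0 := by
    intro k
    have hcont : ContinuousOn (fun t => Q.eval t) (Set.Icc (x k) (u k)) :=
      (Polynomial.continuous Q).continuousOn
    rcases Nat.even_or_odd (k:ℕ) with he | ho
    · have h1 : Q.eval (x k) < 0 := by have := hQx k; rw [he.neg_one_pow, one_mul] at this; exact this
      have h2 : 0 < Q.eval (u k) := by have := hQu k; rw [he.neg_one_pow, one_mul] at this; exact this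
      have := intermediate_value_Ioo (hu_gt k).le hcont
      obtain ⟨r, hrmem, hr0⟩ := this (Set.mem_Ioo.2 ⟨h1, h2⟩)
      exact ⟨r, hrmem, hr0⟩
    · have h1 : 0 < Q.eval (x k) := by
        have := hQx k; rw [ho.neg_one_pow] at this; linarith
      have h2 : Q.eval (u k) < 0 := by
        have := hQu k; rw [ho.neg_one_pow] at this; linarith
      have := intermediate_value_Ioo' (hu_gt k).le hcont
      obtain ⟨r, hrmem, hr0⟩ := this (Set.mem_Ioo.2 ⟨h2, h1⟩)
      exact ⟨r, hrmem, hr0⟩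
  choose r hrmem hrroot using hr
  -- ### the big root
  have hQ1pos : 0 < Q.eval 1 := by
    have hp : 0 < P.eval 1 := by
      rw [hPe]
      exact mul_pos hc (Finset.prod_pos fun i _ => by have := hxneg i; linarith)
    rw [hQe]
    simp only [sub_self, mul_zero, one_mul, zero_mul, zero_add]
    nlinarith
  have htb : Filter.Tendsto (fun t => Q.eval t) Filter.atTop Filter.atBot := by
    apply Polynomial.tendsto_atBot_of_leadingCoeff_nonpos
    · rw [degree_eq_natDegree hQ0, hQdeg]
      exact_mod_cast Nat.zero_lt_succ _
    · rw [hQlc]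
      exact mul_nonpos_of_nonneg_of_nonpos hc.le hsan'.le
  obtain ⟨t0, ht0neg, ht0ge⟩ :=
    ((htb.eventually (Filter.eventually_lt_atBot 0)).and (Filter.eventually_ge_atTop (2:ℝ))).exists
  obtain ⟨rb, hrbmem, hrb0⟩ :=
    intermediate_value_Ioo' (by linarith : (1:ℝ) ≤ t0)
      (Polynomial.continuous Q).continuousOn (Set.mem_Ioo.2 ⟨ht0neg, hQ1pos⟩)
  -- ### assemble z
  set z : Fin (m+2) → ℝ := Fin.snoc r rb with hz
  have hzlast : z (Fin.last (m+1)) = rb := Fin.snoc_last _ _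
  have hzcast : ∀ k : Fin (m+1), z k.castSucc = r k := fun k => Fin.snoc_castSucc _ _ _
  have hrneg : ∀ k, r k < 0 := fun k => lt_of_lt_of_le (hrmem k).2 (hu_le k)
  have hrb1 : 1 < rb := hrbmem.1
  have hranti : ∀ k l : Fin (m+1), k < l → r l < r k := by
    intro k l hkl
    have hl0 : (l:ℕ) ≠ 0 := by
      have := hkl
      simp only [Fin.lt_def] at this
      omega
    have hul : u l = x ⟨(l:ℕ) - 1, by omega⟩ := dif_neg hl0
    have h1 : r l < u l := (hrmem l).2
    have h3 : x ⟨(l:ℕ) - 1, by omega⟩ ≤ x k := by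
      rcases eq_or_lt_of_le (show (k:ℕ) ≤ (l:ℕ) - 1 by
        simp only [Fin.lt_def] at hkl; omega) with heq | hlt
      · have hkk : k = ⟨(l:ℕ) - 1, by omega⟩ := Fin.ext heq
        exact (congrArg x hkk).ge
      · exact (hxmono k ⟨(l:ℕ) - 1, by omega⟩ (by simp [Fin.lt_def]; omega)).le
    have h2 : x k < r k := (hrmem k).1
    linarith
  have hrinj : Function.Injective r := by
    intro a b hab
    by_contra hne
    rcases lt_or_gt_of_ne hne with h | h
    · exact absurd hab (ne_of_gt (hranti a b h))
    · exact absurd hab (ne_of_lt (hranti b a h))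
  have hzinj : Function.Injective z := by
    intro a b hab
    rcases eq_or_ne a (Fin.last (m+1)) with rfl | ha <;>
      rcases eq_or_ne b (Fin.last (m+1)) with rfl | hb
    · rfl
    · obtain ⟨b', rfl⟩ := Fin.exists_castSucc_eq.2 hb
      rw [hzlast, hzcast] at hab
      exact absurd hab (by have := hrneg b'; intro h; linarith)
    · obtain ⟨a', rfl⟩ := Fin.exists_castSucc_eq.2 ha
      rw [hzlast, hzcast] at hab
      exact absurd hab (by have := hrneg a'; intro h; linarith)
    · obtain ⟨a', rfl⟩ := Fin.exists_castSucc_eq.2 ha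
      obtain ⟨b', rfl⟩ := Fin.exists_castSucc_eq.2 hb
      rw [hzcast, hzcast] at hab
      exact congrArg _ (hrinj hab)
  have hzroot : ∀ i, Q.eval (z i) = 0 := by
    intro i
    rcases eq_or_ne i (Fin.last (m+1)) with rfl | hi
    · rw [hzlast]; exact hrb0
    · obtain ⟨i', rfl⟩ := Fin.exists_castSucc_eq.2 hi
      rw [hzcast]; exact hrroot i'
  -- ### roots multiset
  have hroots : Multiset.map z Finset.univ.val = Q.roots := by
    apply Multiset.eq_of_le_of_card_le
    · rw [Multiset.le_iff_subset (Finset.univ.nodup.map hzinj)]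
      intro a ha
      obtain ⟨i, _, rfl⟩ := Multiset.mem_map.1 ha
      exact (mem_roots hQ0).2 (hzroot i)
    · calc Multiset.card Q.roots ≤ Q.natDegree := Q.card_roots'
      _ = m + 2 := hQdeg
      _ = Multiset.card (Multiset.map z Finset.univ.val) := by
          rw [Multiset.card_map]; simp
  refine ⟨hQdeg, z, ?_, Fin.last (m+1), hzlast ▸ hrb1, ?_⟩
  · have hcard : Multiset.card Q.roots = Q.natDegree := by
      rw [← hroots, Multiset.card_map, hQdeg]; simp
    have := Polynomial.C_leadingCoeff_mul_prod_multiset_X_sub_C (p := Q) hcard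
    conv_lhs => rw [← this, ← hroots]
    rw [Multiset.map_map, Finset.prod_eq_multiset_prod]
    rfl
  · intro i hi
    obtain ⟨i', rfl⟩ := Fin.exists_castSucc_eq.2 hi
    rw [hzcast]
    exact hrneg i'
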